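/- The tiny Kaplansky superalgebra K₃, the 3-dimensional ℤ/2-graded algebra with even basis element ε and odd basis elements a, b, and multiplication ε·ε = ε, ε·a = a·ε = (1/2)a, ε·b = b·ε = (1/2)b, a·b = -b·a = ε, a·a = b·b = 0, is a simple algebra (it has no nonzero proper two-sided ideal). -/

import Mathlib

/-- The multiplication of the tiny Kaplansky superalgebra `K₃` on coordinates with
respect to the basis `{ε, a, b}` (`ε` even, `a, b` odd):
`ε·ε = ε`, `ε·a = a·ε = (1/2)a`, `ε·b = b·ε = (1/2)b`, `a·b = -b·a = ε`,
`a·a = b·b = 0`. -/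
def K3mul {K : Type*} [Field K] (x y : K × K × K) : K × K × K :=
  (x.1 * y.1 + x.2.1 * y.2.2 - x.2.2 * y.2.1,
   (1 / 2 : K) * (x.1 * y.2.1 + x.2.1 * y.1),
   (1 / 2 : K) * (x.1 * y.2.2 + x.2.2 * y.1))

/-- The tiny Kaplansky superalgebra `K₃` over a field of characteristic
zero is simple: it has no nonzero proper two-sided ideal (an ideal being a linear
subspace stable under left and right multiplication by arbitrary elements). -/
theorem stmt15 {K : Type*} [Field K] [CharZero K]
    (I : Submodule K (K × K × K))
    (hI : ∀ x ∈ I, ∀ y : K × K × K, K3mul x y ∈ I ∧ K3mul y x ∈ I) :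
    I = ⊥ ∨ I = ⊤ := by
  by_cases hbot : I = ⊥
  · exact Or.inl hbot
  right
  obtain ⟨x, hxI, hx0⟩ := Submodule.exists_mem_ne_zero_of_ne_bot hbot
  -- Step 1: ε = (1,0,0) ∈ I
  have heps : ((1 : K), (0 : K), (0 : K)) ∈ I := by
    -- first: from any y ∈ I with y.1 ≠ 0, get ε
    have key : ∀ y : K × K × K, y ∈ I → y.1 ≠ 0 → ((1:K), (0:K), (0:K)) ∈ I := by
      intro y hyI hy1
      have h1 : K3mul y (1, 0, 0) ∈ I := (hI y hyI (1, 0, 0)).1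
      have h2 : (y.1)⁻¹ • ((2:K) • K3mul y (1, 0, 0) - y) ∈ I :=
        I.smul_mem _ (I.sub_mem (I.smul_mem _ h1) hyI)
      have heq : (y.1)⁻¹ • ((2:K) • K3mul y (1, 0, 0) - y) = ((1:K), (0:K), (0:K)) := by
        simp only [K3mul, Prod.smul_mk, Prod.mk_sub_mk, smul_eq_mul, Prod.smul_def,
          Prod.ext_iff, Prod.fst, Prod.snd, Prod.fst_sub, Prod.snd_sub]
        constructor
        · field_simp; ring_nf
        constructor <;> (show _ * _ = (0:K)) <;> ring_nf <;> field_simp <;> ring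
      rw [heq] at h2; exact h2
    by_cases h1 : x.1 ≠ 0
    · exact key x hxI h1
    push_neg at h1
    by_cases h3 : x.2.2 ≠ 0
    · -- K3mul x (0,1,0) = (-x.2.2, x.1/2, 0); with x.1 = 0 it's (-x.2.2, 0, 0)
      have hm : K3mul x (0, 1, 0) ∈ I := (hI x hxI (0, 1, 0)).1
      apply key _ hm
      simp [K3mul, h1, h3]
    · push_neg at h3
      have h2 : x.2.1 ≠ 0 := by
        intro h2
        exact hx0 (by simp [Prod.ext_iff, h1, h2, h3])
      have hm : K3mul x (0, 0, 1) ∈ I := (hI x hxI (0, 0, 1)).1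
      apply key _ hm
      simp [K3mul, h1, h2]
  -- Step 2: a = (0,1,0) and b = (0,0,1) ∈ I
  have ha : ((0:K), (1:K), (0:K)) ∈ I := by
    have h1 : (2:K) • K3mul ((1:K), (0:K), (0:K)) (0, 1, 0) ∈ I :=
      I.smul_mem _ (hI _ heps (0, 1, 0)).1
    have heq : ((2:K)) • K3mul ((1:K), (0:K), (0:K)) ((0:K), (1:K), (0:K)) = ((0:K), (1:K), (0:K)) := by
      simp [K3mul, Prod.smul_def, Prod.ext_iff]
    rwa [heq] at h1
  have hb : ((0:K), (0:K), (1:K)) ∈ I := by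
    have h1 : (2:K) • K3mul ((1:K), (0:K), (0:K)) (0, 0, 1) ∈ I :=
      I.smul_mem _ (hI _ heps (0, 0, 1)).1
    have heq : ((2:K)) • K3mul ((1:K), (0:K), (0:K)) ((0:K), (0:K), (1:K)) = ((0:K), (0:K), (1:K)) := by
      simp [K3mul, Prod.smul_def, Prod.ext_iff]
    rwa [heq] at h1
  -- Step 3: I = ⊤
  rw [Submodule.eq_top_iff']
  intro v
  have : v = v.1 • ((1:K), (0:K), (0:K)) + v.2.1 • ((0:K), (1:K), (0:K))
      + v.2.2 • ((0:K), (0:K), (1:K)) := by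
    simp [Prod.smul_def, Prod.ext_iff]
  rw [this]
  exact I.add_mem (I.add_mem (I.smul_mem _ heps) (I.smul_mem _ ha)) (I.smul_mem _ hb)
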